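/- Suppose 0 < |u⁺| < c_s(ρ⁺), where ρ⁺ = (V⁺)². Then g'(V⁺) > 0, there exists a unique V₂ ∈ (0, V⁺) with g(V₂) = 0, the only zeros of g on (0,∞) are V₂ and V⁺, and there exists V* ∈ (0, V₂) such that G(V*) = G(V⁺), with G(V) < G(V⁺) for 0 < V < V* and G(V) > G(V⁺) for V* < V < V⁺. -/

import Mathlib

open Real

/-- Enthalpy: `h(ρ) = ln ρ` if `γ = 1`, `h(ρ) = (γ/(γ-1)) ρ^(γ-1)` if `γ > 1`. -/
noncomputable def enth (γ ρ : ℝ) : ℝ :=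
  if γ = 1 then Real.log ρ else (γ / (γ - 1)) * ρ ^ (γ - 1)

lemma enth_one (ρ : ℝ) : enth 1 ρ = Real.log ρ := by unfold enth; rw [if_pos rfl]

lemma enth_gt {γ : ℝ} (h : γ ≠ 1) (ρ : ℝ) : enth γ ρ = (γ / (γ - 1)) * ρ ^ (γ - 1) := by
  unfold enth; rw [if_neg h]

lemma enth_hasDerivAt (γ : ℝ) (hγ : 1 ≤ γ) (V : ℝ) (hV : 0 < V) :
    HasDerivAt (fun V : ℝ => enth γ (V ^ 2)) (2 * γ * V ^ (2 * γ - 3)) V := by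
  have hVne : V ≠ 0 := ne_of_gt hV
  have hVsq : (V:ℝ)^2 = V ^ (2:ℝ) := by
    rw [← Real.rpow_natCast V 2]; norm_num
  have hpow : HasDerivAt (fun x : ℝ => x ^ 2) (2 * V) V := by
    simpa using hasDerivAt_pow 2 V
  have h2 : (V : ℝ) ^ 2 ≠ 0 := by positivity
  rcases eq_or_lt_of_le hγ with h1 | h1
  · subst h1
    simp only [enth_one]
    have hd : 2 * (1:ℝ) * V ^ (2 * (1:ℝ) - 3) = 2 * V / V ^ 2 := by
      have : (2 * (1:ℝ) - 3) = (-1 : ℝ) := by norm_num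
      rw [this, Real.rpow_neg_one]
      field_simp
    rw [hd]
    exact hpow.log h2
  · have hne : γ ≠ 1 := ne_of_gt h1
    simp only [enth_gt hne]
    have hγ1 : γ - 1 ≠ 0 := sub_ne_zero.mpr hne
    have h1' : ((V:ℝ) ^ 2) ^ (γ - 1 - 1) = V ^ (2*γ - 4) := by
      rw [hVsq, ← Real.rpow_mul hV.le]; ring_nf
    have h2' : V ^ (2*γ - 4) * V = V ^ (2*γ-3) := by
      nth_rewrite 2 [← Real.rpow_one V]
      rw [← Real.rpow_add hV]; ring_nf
    have hrp := (hpow.rpow_const (p := γ - 1) (Or.inl h2)).const_mul (γ / (γ - 1))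
    refine hrp.congr_deriv ?_
    rw [h1', ← h2']
    field_simp

lemma enth_ge (γ : ℝ) (hγ : 1 ≤ γ) (a : ℝ) (ha : 0 < a) :
    -1 / a ^ 2 ≤ enth γ (a ^ 2) := by
  rcases eq_or_lt_of_le hγ with h1 | h1
  · subst h1
    rw [enth_one]
    have h2 : (0:ℝ) < a ^ 2 := by positivity
    have hlog := Real.log_le_sub_one_of_pos (x := (a^2)⁻¹) (by positivity)
    rw [Real.log_inv] at hlog
    have h3 : -1/a^2 = -(a^2)⁻¹ := by field_simp
    linarith [h3]
  · have hne : γ ≠ 1 := ne_of_gt h1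
    rw [enth_gt hne]
    have h2 : (0:ℝ) ≤ (γ / (γ - 1)) * (a^2) ^ (γ - 1) := by
      apply mul_nonneg
      · apply div_nonneg (by linarith) (by linarith)
      · exact (Real.rpow_pos_of_pos (by positivity) _).le
    have h3 : (0:ℝ) < 1 / a ^ 2 := by positivity
    have h4 : -1/a^2 = -(1/a^2) := by ring
    linarith

lemma phi_pos_aux (C₁ C₂ E a : ℝ) (ha0 : 0 < a) (ha1 : a ≤ 1) (hE : -1/a^2 ≤ E)
    (hasq : a^2 * (4*(1+|C₂|)) ≤ C₁^2) : 0 < C₁^2/(2*a^4) + E + C₂ := by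
  have h2 : (0:ℝ) < a^2 := by positivity
  have h4 : (0:ℝ) < a^4 := by positivity
  have habs : -|C₂| ≤ C₂ := neg_abs_le C₂
  have habs0 : 0 ≤ |C₂| := abs_nonneg C₂
  have hbound : 2*(1+|C₂|)/a^2 ≤ C₁^2/(2*a^4) := by
    rw [div_le_div_iff₀ h2 (by positivity)]
    nlinarith [mul_le_mul_of_nonneg_right hasq h2.le]
  have hinv1 : (1:ℝ) ≤ 1/a^2 := by
    rw [le_div_iff₀ h2]; nlinarith
  have ha2 : a^2 ≤ 1 := by nlinarith
  have h5 : 2*|C₂| ≤ 2*|C₂|/a^2 := by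
    rw [le_div_iff₀ h2]
    nlinarith [mul_le_mul_of_nonneg_left ha2 habs0]
  have expand : 2*(1+|C₂|)/a^2 = 2*(1/a^2) + 2*|C₂|/a^2 := by ring
  have h6 : -1/a^2 = -(1/a^2) := by ring
  nlinarith


lemma Gb_aux1 (C₁ C₂ k b : ℝ) (hk : 0 < k) (hb : 0 < b) (hb1 : b ≤ 1) :
    (1/k^2)*(-C₁^2/(4*b^2) + (1/2)*(C₂-1)*b^2 + (1/2)*b^2*Real.log (b^2)) ≤
      -C₁^2/(4*k^2*b^2) + (|C₂|+1)/k^2 := by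
  have hL : Real.log (b^2) ≤ 0 := Real.log_nonpos (by positivity) (by nlinarith)
  have hb2 : b^2 ≤ 1 := by nlinarith
  have habs : C₂ ≤ |C₂| := le_abs_self C₂
  have habs0 : 0 ≤ |C₂| := abs_nonneg C₂
  have t1 : (1/2)*b^2*Real.log (b^2) ≤ 0 :=
    mul_nonpos_of_nonneg_of_nonpos (by positivity) hL
  have t2 : (1/2)*(C₂-1)*b^2 ≤ |C₂|+1 := by
    rcases le_or_gt 0 (C₂-1) with h | h
    · nlinarith
    · nlinarith [sq_nonneg b]
  have key : (1/2)*(C₂-1)*b^2 + (1/2)*b^2*Real.log (b^2) ≤ |C₂|+1 := by linarith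
  have expand : (1/k^2)*(-C₁^2/(4*b^2) + (1/2)*(C₂-1)*b^2 + (1/2)*b^2*Real.log (b^2)) =
      -C₁^2/(4*k^2*b^2) + (1/k^2)*((1/2)*(C₂-1)*b^2 + (1/2)*b^2*Real.log (b^2)) := by
    field_simp; ring
  rw [expand]
  have h3 : (1/k^2)*((1/2)*(C₂-1)*b^2 + (1/2)*b^2*Real.log (b^2)) ≤ (1/k^2)*(|C₂|+1) :=
    mul_le_mul_of_nonneg_left key (by positivity)
  have e2 : (1/k^2)*(|C₂|+1) = (|C₂|+1)/k^2 := by ring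
  linarith

lemma Gb_aux2 (γ C₁ C₂ k b : ℝ) (hγ : 1 < γ) (hk : 0 < k) (hb : 0 < b) (hb1 : b ≤ 1) :
    (1/(4*k^2))*(-C₁^2/b^2 + 2*C₂*b^2 + (2/(γ-1))*b^(2*γ)) ≤
      -C₁^2/(4*k^2*b^2) + ((|C₂|+1)/k^2 + (2/(γ-1))/(4*k^2)) := by
  have hγ1 : (0:ℝ) < γ - 1 := by linarith
  have hr1 : b^(2*γ) ≤ 1 := Real.rpow_le_one hb.le hb1 (by linarith)
  have hr0 : (0:ℝ) < b^(2*γ) := Real.rpow_pos_of_pos hb _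
  have hb2 : b^2 ≤ 1 := by nlinarith
  have habs : C₂ ≤ |C₂| := le_abs_self C₂
  have habs0 : 0 ≤ |C₂| := abs_nonneg C₂
  have t1 : 2*C₂*b^2 ≤ 4*(|C₂|+1) := by
    rcases le_or_gt 0 C₂ with h | h
    · nlinarith
    · nlinarith [sq_nonneg b]
  have t2 : (2/(γ-1))*b^(2*γ) ≤ 2/(γ-1) := by
    have hc : (0:ℝ) ≤ 2/(γ-1) := by positivity
    nlinarith
  have key : 2*C₂*b^2 + (2/(γ-1))*b^(2*γ) ≤ 4*(|C₂|+1) + 2/(γ-1) := by linarith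
  have expand : (1/(4*k^2))*(-C₁^2/b^2 + 2*C₂*b^2 + (2/(γ-1))*b^(2*γ)) =
      -C₁^2/(4*k^2*b^2) + (1/(4*k^2))*(2*C₂*b^2 + (2/(γ-1))*b^(2*γ)) := by
    field_simp; ring
  rw [expand]
  have h3 : (1/(4*k^2))*(2*C₂*b^2 + (2/(γ-1))*b^(2*γ)) ≤ (1/(4*k^2))*(4*(|C₂|+1) + 2/(γ-1)) :=
    mul_le_mul_of_nonneg_left key (by positivity)
  have e2 : (1/(4*k^2))*(4*(|C₂|+1) + 2/(γ-1)) = (|C₂|+1)/k^2 + (2/(γ-1))/(4*k^2) := by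
    field_simp
  linarith

set_option maxHeartbeats 1000000 in
/-- In the subsonic regime `0 < |u⁺| < c_s(ρ⁺)` one has `g'(V⁺) > 0`, there is a unique
second zero `V₂ ∈ (0, V⁺)` of `g`, and a point `V* ∈ (0, V₂)` where `G(V*) = G(V⁺)`,
with `G < G(V⁺)` on `(0, V*)` and `G > G(V⁺)` on `(V*, V⁺)`. -/
theorem subsonic_structure_nonlinear_viscosity
    (γ k Vp up : ℝ) (hγ : 1 ≤ γ) (hk : 0 < k) (hVp : 0 < Vp)
    (C₁ C₂ : ℝ) (hC₁ : C₁ = -up * Vp ^ 2)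
    (hC₂ : C₂ = -up ^ 2 / 2 - enth γ (Vp ^ 2))
    (g : ℝ → ℝ)
    (hg : ∀ V : ℝ, 0 < V → g V = (C₁ ^ 2 / (2 * V ^ 4) + enth γ (V ^ 2) + C₂) * V)
    (G : ℝ → ℝ)
    (hG : ∀ V : ℝ, 0 < V → G V =
      if γ = 1 then
        (1 / k ^ 2) * (-C₁ ^ 2 / (4 * V ^ 2) + (1 / 2) * (C₂ - 1) * V ^ 2 +
          (1 / 2) * V ^ 2 * Real.log (V ^ 2))
      else
        (1 / (4 * k ^ 2)) * (-C₁ ^ 2 / V ^ 2 + 2 * C₂ * V ^ 2 +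
          (2 / (γ - 1)) * V ^ (2 * γ)))
    (hu0 : 0 < |up|) (hu1 : |up| < Real.sqrt (γ * (Vp ^ 2) ^ (γ - 1))) :
    0 < deriv g Vp ∧
    ∃ V₂, V₂ ∈ Set.Ioo 0 Vp ∧ g V₂ = 0 ∧
      (∀ V : ℝ, 0 < V → g V = 0 → V = V₂ ∨ V = Vp) ∧
      ∃ Vs, Vs ∈ Set.Ioo 0 V₂ ∧ G Vs = G Vp ∧
        (∀ V : ℝ, 0 < V → V < Vs → G V < G Vp) ∧
        (∀ V : ℝ, Vs < V → V < Vp → G Vp < G V) := by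
  have hγ0 : (0:ℝ) < γ := by linarith
  have hup : up ≠ 0 := by
    intro h; rw [h, abs_zero] at hu0; exact lt_irrefl 0 hu0
  have hC1sq : C₁ ^ 2 = up ^ 2 * Vp ^ 4 := by rw [hC₁]; ring
  have hC1pos : (0:ℝ) < C₁ ^ 2 := by
    rw [hC1sq]; positivity
  -- sound speed inequality
  have hVpsq : (Vp:ℝ) ^ 2 = Vp ^ (2:ℝ) := by rw [← Real.rpow_natCast Vp 2]; norm_num
  have hVp2pow : ((Vp:ℝ) ^ 2) ^ (γ - 1) = Vp ^ (2*γ - 2) := by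
    rw [hVpsq, ← Real.rpow_mul hVp.le]; ring_nf
  have hcs : up ^ 2 < γ * Vp ^ (2*γ - 2) := by
    have h := (Real.lt_sqrt (abs_nonneg up)).mp hu1
    rwa [sq_abs, hVp2pow] at h
  -- the function φ with g V = φ V * V
  obtain ⟨φ, hφdef⟩ : ∃ φ : ℝ → ℝ, φ = fun V => C₁ ^ 2 / (2 * V ^ 4) + enth γ (V ^ 2) + C₂ :=
    ⟨_, rfl⟩
  obtain ⟨φ', hφ'def⟩ : ∃ φ' : ℝ → ℝ, φ' = fun V => -2 * C₁ ^ 2 / V ^ 5 + 2 * γ * V ^ (2*γ - 3) :=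
    ⟨_, rfl⟩
  have hgφ : ∀ V : ℝ, 0 < V → g V = φ V * V := by
    intro V hV; rw [hφdef]; exact hg V hV
  have hφD : ∀ V : ℝ, 0 < V → HasDerivAt φ (φ' V) V := by
    intro V hV
    have h4 : (2:ℝ) * V ^ 4 ≠ 0 := by positivity
    have hden : HasDerivAt (fun V : ℝ => 2 * V ^ 4) (2 * (4 * V ^ 3)) V := by
      exact (hasDerivAt_pow 4 V).const_mul 2
    have hq : HasDerivAt (fun V : ℝ => C₁ ^ 2 / (2 * V ^ 4)) (-2 * C₁ ^ 2 / V ^ 5) V := by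
      have := (hasDerivAt_const V (C₁ ^ 2)).div hden h4
      refine this.congr_deriv ?_
      have hVne : V ≠ 0 := ne_of_gt hV
      field_simp; ring
    rw [hφdef, hφ'def]
    exact (hq.add (enth_hasDerivAt γ hγ V hV)).add_const C₂
  have hφVp : φ Vp = 0 := by
    simp only [hφdef]
    rw [hC1sq, hC₂]
    have h4 : (Vp:ℝ) ^ 4 ≠ 0 := by positivity
    field_simp; ring
  -- factorization of φ'
  have hφ'fac : ∀ V : ℝ, 0 < V → φ' V = (2 / V ^ 5) * (γ * V ^ (2*γ + 2) - C₁ ^ 2) := by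
    intro V hV
    have hVne : V ≠ 0 := ne_of_gt hV
    have h5 : (V:ℝ) ^ 5 = V ^ (5:ℝ) := by rw [← Real.rpow_natCast V 5]; norm_num
    have key : V ^ (2*γ + 2) = V ^ (2*γ - 3) * V ^ 5 := by
      rw [h5, ← Real.rpow_add hV]; ring_nf
    simp only [hφ'def]
    rw [key]
    field_simp
    ring
  -- the critical point Vm
  obtain ⟨Vm, hVmdef⟩ : ∃ Vm : ℝ, Vm = (C₁ ^ 2 / γ) ^ ((2*γ + 2)⁻¹ : ℝ) := ⟨_, rfl⟩
  have hbase : (0:ℝ) < C₁ ^ 2 / γ := div_pos hC1pos hγ0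
  have hVm0 : 0 < Vm := hVmdef ▸ Real.rpow_pos_of_pos hbase _
  have hexp : (0:ℝ) < 2*γ + 2 := by linarith
  have hVmpow : Vm ^ (2*γ + 2) = C₁ ^ 2 / γ := by
    rw [hVmdef, ← Real.rpow_mul hbase.le, inv_mul_cancel₀ (ne_of_gt hexp), Real.rpow_one]
  have hφ'neg : ∀ V : ℝ, 0 < V → V < Vm → φ' V < 0 := by
    intro V hV hVVm
    rw [hφ'fac V hV]
    have h1 : V ^ (2*γ + 2) < Vm ^ (2*γ + 2) :=
      Real.rpow_lt_rpow hV.le hVVm hexp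
    rw [hVmpow] at h1
    have h2 : γ * V ^ (2*γ + 2) - C₁ ^ 2 < 0 := by
      have := (lt_div_iff₀ hγ0).mp h1
      nlinarith
    have h3 : (0:ℝ) < 2 / V ^ 5 := by positivity
    exact mul_neg_of_pos_of_neg h3 h2
  have hφ'pos : ∀ V : ℝ, Vm < V → 0 < φ' V := by
    intro V hVVm
    have hV : 0 < V := lt_trans hVm0 hVVm
    rw [hφ'fac V hV]
    have h1 : Vm ^ (2*γ + 2) < V ^ (2*γ + 2) :=
      Real.rpow_lt_rpow hVm0.le hVVm hexp
    rw [hVmpow] at h1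
    have h2 : 0 < γ * V ^ (2*γ + 2) - C₁ ^ 2 := by
      have := (div_lt_iff₀ hγ0).mp h1
      nlinarith
    have h3 : (0:ℝ) < 2 / V ^ 5 := by positivity
    exact mul_pos h3 h2
  -- Vm < Vp
  have hVmVp : Vm < Vp := by
    have hppow : C₁ ^ 2 / γ < Vp ^ (2*γ + 2) := by
      have key : Vp ^ (2*γ + 2) = Vp ^ (2*γ - 2) * Vp ^ 4 := by
        have h4 : (Vp:ℝ) ^ 4 = Vp ^ (4:ℝ) := by rw [← Real.rpow_natCast Vp 4]; norm_num
        rw [h4, ← Real.rpow_add hVp]; ring_nf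
      rw [key, hC1sq, div_lt_iff₀ hγ0]
      have h4 : (0:ℝ) < Vp ^ 4 := by positivity
      nlinarith
    by_contra h
    push_neg at h
    have := Real.rpow_le_rpow hVp.le h hexp.le
    rw [hVmpow] at this
    linarith
  -- monotonicity of φ
  have hφcont : ∀ s : Set ℝ, s ⊆ Set.Ioi 0 → ContinuousOn φ s := by
    intro s hs V hV
    exact ((hφD V (hs hV)).continuousAt).continuousWithinAt
  have hφanti : StrictAntiOn φ (Set.Ioc 0 Vm) := by
    apply strictAntiOn_of_deriv_neg (convex_Ioc 0 Vm)
    · exact hφcont _ Set.Ioc_subset_Ioi_self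
    · intro x hx
      rw [interior_Ioc] at hx
      rw [(hφD x hx.1).deriv]
      exact hφ'neg x hx.1 hx.2
  have hφmono : StrictMonoOn φ (Set.Ici Vm) := by
    apply strictMonoOn_of_deriv_pos (convex_Ici Vm)
    · apply hφcont
      intro x hx
      exact lt_of_lt_of_le hVm0 hx
    · intro x hx
      rw [interior_Ici] at hx
      rw [(hφD x (lt_trans hVm0 hx)).deriv]
      exact hφ'pos x hx
  have hφVm : φ Vm < 0 := by
    have := hφmono Set.self_mem_Ici (Set.mem_Ici.mpr hVmVp.le) hVmVp
    rwa [hφVp] at this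
  -- choice of a small point where φ is positive
  obtain ⟨a, hadef⟩ : ∃ a : ℝ, a = min (Vm/2) (min 1 (|C₁| / (2 * Real.sqrt (1 + |C₂|)))) :=
    ⟨_, rfl⟩
  have hsqrtpos : (0:ℝ) < Real.sqrt (1 + |C₂|) := by
    apply Real.sqrt_pos.mpr
    have := abs_nonneg C₂
    linarith
  have hC1ne : C₁ ≠ 0 := by
    intro h; rw [h] at hC1pos; simp at hC1pos
  have ha0 : 0 < a := by
    rw [hadef]
    apply lt_min (by linarith)
    apply lt_min one_pos
    positivity
  have ha1 : a ≤ 1 := hadef ▸ le_trans (min_le_right _ _) (min_le_left _ _)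
  have haVm : a < Vm := hadef ▸ lt_of_le_of_lt (min_le_left _ _) (by linarith)
  have hasq : a ^ 2 * (4 * (1 + |C₂|)) ≤ C₁ ^ 2 := by
    have h1 : a ≤ |C₁| / (2 * Real.sqrt (1 + |C₂|)) :=
      hadef ▸ le_trans (min_le_right _ _) (min_le_right _ _)
    have h2 : a ^ 2 ≤ (|C₁| / (2 * Real.sqrt (1 + |C₂|))) ^ 2 := by
      apply pow_le_pow_left₀ ha0.le h1
    have h3 : (|C₁| / (2 * Real.sqrt (1 + |C₂|))) ^ 2 = C₁ ^ 2 / (4 * (1 + |C₂|)) := by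
      rw [div_pow, sq_abs, mul_pow, Real.sq_sqrt (by positivity : (0:ℝ) ≤ 1 + |C₂|)]
      norm_num
    rw [h3] at h2
    have h4 : (0:ℝ) < 4 * (1 + |C₂|) := by positivity
    rw [le_div_iff₀ h4] at h2
    linarith
  have hφa : 0 < φ a := by
    rw [hφdef]
    exact phi_pos_aux C₁ C₂ _ a ha0 ha1 (enth_ge γ hγ a ha0) hasq
  -- existence of V₂
  have hφcontIcc : ContinuousOn φ (Set.Icc a Vm) := by
    apply hφcont
    intro x hx
    exact lt_of_lt_of_le ha0 hx.1
  have hV₂ex : ∃ V₂ ∈ Set.Ioo a Vm, φ V₂ = 0 := by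
    have h0 : (0:ℝ) ∈ Set.Ioo (φ Vm) (φ a) := ⟨hφVm, hφa⟩
    have := intermediate_value_Ioo' haVm.le hφcontIcc h0
    obtain ⟨V₂, hV₂mem, hV₂eq⟩ := this
    exact ⟨V₂, hV₂mem, hV₂eq⟩
  obtain ⟨V₂, hV₂mem, hφV₂⟩ := hV₂ex
  have hV₂0 : 0 < V₂ := lt_trans ha0 hV₂mem.1
  have hV₂Vm : V₂ < Vm := hV₂mem.2
  have hV₂Vp : V₂ < Vp := lt_trans hV₂Vm hVmVp
  -- sign of φ
  have hφpos : ∀ V : ℝ, 0 < V → V < V₂ → 0 < φ V := by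
    intro V hV hVV₂
    have h := hφanti ⟨hV, by linarith⟩ ⟨hV₂0, hV₂Vm.le⟩ hVV₂
    rwa [hφV₂] at h
  have hφneg : ∀ V : ℝ, V₂ < V → V < Vp → φ V < 0 := by
    intro V hV₂V hVVp
    rcases le_or_gt V Vm with hVm' | hVm'
    · have h := hφanti ⟨hV₂0, hV₂Vm.le⟩ ⟨lt_trans hV₂0 hV₂V, hVm'⟩ hV₂V
      rwa [hφV₂] at h
    · have h := hφmono (Set.mem_Ici.mpr hVm'.le) (Set.mem_Ici.mpr (lt_trans hVm' hVVp).le) hVVp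
      rwa [hφVp] at h
  -- uniqueness of zeros of φ
  have hφuniq : ∀ V : ℝ, 0 < V → φ V = 0 → V = V₂ ∨ V = Vp := by
    intro V hV hVeq
    rcases le_or_gt V Vm with hVm' | hVm'
    · left
      apply hφanti.injOn ⟨hV, hVm'⟩ ⟨hV₂0, hV₂Vm.le⟩
      rw [hVeq, hφV₂]
    · right
      rcases lt_trichotomy V Vp with h | h | h
      · exfalso
        have := hφneg V ?_ h
        · rw [hVeq] at this; exact lt_irrefl 0 this
        · linarith
      · exact h
      · exfalso
        have := hφmono (Set.mem_Ici.mpr hVmVp.le) (Set.mem_Ici.mpr hVm'.le) h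
        rw [hφVp, hVeq] at this
        exact lt_irrefl 0 this
  -- derivative of g at Vp
  have hgD : HasDerivAt g (φ' Vp * Vp + φ Vp) Vp := by
    have hform : HasDerivAt (fun V => φ V * V) (φ' Vp * Vp + φ Vp * 1) Vp :=
      (hφD Vp hVp).mul (hasDerivAt_id Vp)
    have heq : g =ᶠ[nhds Vp] fun V => φ V * V := by
      filter_upwards [IsOpen.mem_nhds isOpen_Ioi hVp] with x hx
      exact hgφ x hx
    have := hform.congr_of_eventuallyEq heq
    simpa using this
  have hgderiv : 0 < deriv g Vp := by
    rw [hgD.deriv, hφVp, add_zero]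
    exact mul_pos (hφ'pos Vp hVmVp) hVp
  refine ⟨hgderiv, V₂, ⟨hV₂0, hV₂Vp⟩, ?_, ?_, ?_⟩
  · rw [hgφ V₂ hV₂0, hφV₂, zero_mul]
  · intro V hV hgV
    rw [hgφ V hV] at hgV
    rcases mul_eq_zero.mp hgV with h | h
    · exact hφuniq V hV h
    · exfalso; rw [h] at hV; exact lt_irrefl 0 hV
  -- derivative of G
  have hkne : k ≠ 0 := ne_of_gt hk
  have hGD : ∀ V : ℝ, 0 < V → HasDerivAt G (φ V * V / k ^ 2) V := by
    intro V hV
    have hVne : V ≠ 0 := ne_of_gt hV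
    have h2ne : V ^ 2 ≠ 0 := by positivity
    have hpow : HasDerivAt (fun x : ℝ => x ^ 2) (2 * V) V := by
      simpa using hasDerivAt_pow 2 V
    rcases eq_or_lt_of_le hγ with h1 | h1
    · subst h1
      have heq : G =ᶠ[nhds V] fun W =>
          (1 / k ^ 2) * (-C₁ ^ 2 / (4 * W ^ 2) + (1 / 2) * (C₂ - 1) * W ^ 2 +
            (1 / 2) * W ^ 2 * Real.log (W ^ 2)) := by
        filter_upwards [IsOpen.mem_nhds isOpen_Ioi hV] with x hx
        rw [hG x hx, if_pos rfl]
      have hden : HasDerivAt (fun W : ℝ => 4 * W ^ 2) (4 * (2 * V)) V := hpow.const_mul 4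
      have hA := (hasDerivAt_const V (-C₁ ^ 2)).div hden (by positivity)
      have hB := hpow.const_mul ((1/2) * (C₂ - 1))
      have hC := (hpow.const_mul (1/2 : ℝ)).mul (hpow.log h2ne)
      have hF := ((hA.add hB).add hC).const_mul (1 / k ^ 2)
      have hG' := hF.congr_of_eventuallyEq heq
      refine hG'.congr_deriv ?_
      simp only [hφdef, enth_one]
      field_simp
      ring
    · have hne : γ ≠ 1 := ne_of_gt h1
      have hγ1 : γ - 1 ≠ 0 := sub_ne_zero.mpr hne
      have heq : G =ᶠ[nhds V] fun W =>
          (1 / (4 * k ^ 2)) * (-C₁ ^ 2 / W ^ 2 + 2 * C₂ * W ^ 2 +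
            (2 / (γ - 1)) * W ^ (2 * γ)) := by
        filter_upwards [IsOpen.mem_nhds isOpen_Ioi hV] with x hx
        rw [hG x hx, if_neg hne]
      have hA := (hasDerivAt_const V (-C₁ ^ 2)).div hpow h2ne
      have hB := hpow.const_mul (2 * C₂)
      have hr : HasDerivAt (fun W : ℝ => W ^ (2 * γ)) (2 * γ * V ^ (2 * γ - 1)) V :=
        Real.hasDerivAt_rpow_const (Or.inl hVne)
      have hC := hr.const_mul (2 / (γ - 1))
      have hF := ((hA.add hB).add hC).const_mul (1 / (4 * k ^ 2))
      have hG' := hF.congr_of_eventuallyEq heq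
      refine hG'.congr_deriv ?_
      simp only [hφdef, enth_gt hne]
      have hVsq' : (V:ℝ) ^ 2 = V ^ (2:ℝ) := by rw [← Real.rpow_natCast V 2]; norm_num
      have hW1 : ((V:ℝ) ^ 2) ^ (γ - 1) = V ^ (2*γ - 2) := by
        rw [hVsq', ← Real.rpow_mul hV.le]; ring_nf
      have hW2 : V ^ (2*γ - 1) = V ^ (2*γ - 2) * V := by
        nth_rewrite 3 [← Real.rpow_one V]
        rw [← Real.rpow_add hV]; ring_nf
      rw [hW1, hW2]
      field_simp
      ring
  -- continuity and monotonicity of G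
  have hGcont : ∀ s : Set ℝ, s ⊆ Set.Ioi 0 → ContinuousOn G s := by
    intro s hs V hV
    exact ((hGD V (hs hV)).continuousAt).continuousWithinAt
  have hGmono : StrictMonoOn G (Set.Ioc 0 V₂) := by
    apply strictMonoOn_of_deriv_pos (convex_Ioc 0 V₂)
    · exact hGcont _ Set.Ioc_subset_Ioi_self
    · intro x hx
      rw [interior_Ioc] at hx
      rw [(hGD x hx.1).deriv]
      exact div_pos (mul_pos (hφpos x hx.1 hx.2) hx.1) (by positivity)
  have hGanti : StrictAntiOn G (Set.Icc V₂ Vp) := by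
    apply strictAntiOn_of_deriv_neg (convex_Icc V₂ Vp)
    · apply hGcont
      intro x hx
      exact lt_of_lt_of_le hV₂0 hx.1
    · intro x hx
      rw [interior_Icc] at hx
      have hx0 : 0 < x := lt_trans hV₂0 hx.1
      rw [(hGD x hx0).deriv]
      have hφx : φ x < 0 := hφneg x hx.1 hx.2
      have : φ x * x < 0 := mul_neg_of_neg_of_pos hφx hx0
      exact div_neg_of_neg_of_pos this (by positivity)
  have hGV₂ : G Vp < G V₂ :=
    hGanti ⟨le_rfl, hV₂Vp.le⟩ ⟨hV₂Vp.le, le_rfl⟩ hV₂Vp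
  -- the constant M and the small point b
  obtain ⟨M, hMdef⟩ : ∃ M : ℝ,
      M = (|C₂|+1)/k^2 + (if γ = 1 then 0 else 2/(γ-1))/(4*k^2) := ⟨_, rfl⟩
  have hGb_bound : ∀ b : ℝ, 0 < b → b ≤ 1 → G b ≤ -C₁^2/(4*k^2*b^2) + M := by
    intro b hb hb1
    rw [hG b hb, hMdef]
    rcases eq_or_lt_of_le hγ with h1 | h1
    · rw [if_pos h1.symm, if_pos h1.symm]
      have := Gb_aux1 C₁ C₂ k b hk hb hb1
      subst h1
      simp only [zero_div]
      linarith [Gb_aux1 C₁ C₂ k b hk hb hb1]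
    · have hne : γ ≠ 1 := ne_of_gt h1
      rw [if_neg hne, if_neg hne]
      exact Gb_aux2 γ C₁ C₂ k b h1 hk hb hb1
  obtain ⟨b, hbdef⟩ : ∃ b : ℝ,
      b = min (V₂/2) (min 1 (|C₁| / (2 * k * Real.sqrt (M + |G Vp| + 1)))) := ⟨_, rfl⟩
  have hM0 : 0 < M + |G Vp| + 1 := by
    have h1 : (0:ℝ) < (|C₂|+1)/k^2 := by positivity
    have h2 : (0:ℝ) ≤ (if γ = 1 then 0 else 2/(γ-1))/(4*k^2) := by
      apply div_nonneg _ (by positivity)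
      rcases eq_or_lt_of_le hγ with h | h
      · rw [if_pos h.symm]
      · rw [if_neg (ne_of_gt h)]
        have : (0:ℝ) < γ - 1 := by linarith
        positivity
    have h3 := abs_nonneg (G Vp)
    rw [hMdef]
    linarith
  have hsqrtM : 0 < Real.sqrt (M + |G Vp| + 1) := Real.sqrt_pos.mpr hM0
  have hb0 : 0 < b := by
    rw [hbdef]
    apply lt_min (by linarith)
    apply lt_min one_pos
    positivity
  have hb1 : b ≤ 1 := hbdef ▸ le_trans (min_le_right _ _) (min_le_left _ _)
  have hbV₂ : b < V₂ := hbdef ▸ lt_of_le_of_lt (min_le_left _ _) (by linarith)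
  have hbsq : b ^ 2 * (4 * k ^ 2 * (M + |G Vp| + 1)) ≤ C₁ ^ 2 := by
    have h1 : b ≤ |C₁| / (2 * k * Real.sqrt (M + |G Vp| + 1)) :=
      hbdef ▸ le_trans (min_le_right _ _) (min_le_right _ _)
    have h2 : b ^ 2 ≤ (|C₁| / (2 * k * Real.sqrt (M + |G Vp| + 1))) ^ 2 :=
      pow_le_pow_left₀ hb0.le h1 2
    have h3 : (|C₁| / (2 * k * Real.sqrt (M + |G Vp| + 1))) ^ 2 =
        C₁ ^ 2 / (4 * k ^ 2 * (M + |G Vp| + 1)) := by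
      rw [div_pow, sq_abs, mul_pow, mul_pow, Real.sq_sqrt hM0.le]
      norm_num
    rw [h3] at h2
    have h4 : (0:ℝ) < 4 * k ^ 2 * (M + |G Vp| + 1) := by positivity
    rw [le_div_iff₀ h4] at h2
    linarith
  have hGbVp : G b < G Vp := by
    have h1 := hGb_bound b hb0 hb1
    have hb2 : (0:ℝ) < b ^ 2 := by positivity
    have h2 : M + |G Vp| + 1 ≤ C₁ ^ 2 / (4 * k ^ 2 * b ^ 2) := by
      rw [le_div_iff₀ (by positivity)]
      nlinarith
    have h3 : -C₁ ^ 2 / (4 * k ^ 2 * b ^ 2) ≤ -(M + |G Vp| + 1) := by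
      have : -(C₁ ^ 2 / (4 * k ^ 2 * b ^ 2)) ≤ -(M + |G Vp| + 1) := neg_le_neg h2
      linarith [this, (by ring : -C₁ ^ 2 / (4 * k ^ 2 * b ^ 2) = -(C₁ ^ 2 / (4 * k ^ 2 * b ^ 2)))]
    have h4 := neg_abs_le (G Vp)
    linarith
  -- existence of Vs by IVT
  have hVsex : ∃ Vs ∈ Set.Ioo b V₂, G Vs = G Vp := by
    have hcont : ContinuousOn G (Set.Icc b V₂) := by
      apply hGcont
      intro x hx
      exact lt_of_lt_of_le hb0 hx.1
    have h0 : G Vp ∈ Set.Ioo (G b) (G V₂) := ⟨hGbVp, hGV₂⟩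
    obtain ⟨Vs, hVsmem, hVseq⟩ := intermediate_value_Ioo hbV₂.le hcont h0
    exact ⟨Vs, hVsmem, hVseq⟩
  obtain ⟨Vs, hVsmem, hVseq⟩ := hVsex
  have hVs0 : 0 < Vs := lt_trans hb0 hVsmem.1
  have hVsV₂ : Vs < V₂ := hVsmem.2
  refine ⟨Vs, ⟨hVs0, hVsV₂⟩, hVseq, ?_, ?_⟩
  · intro V hV hVVs
    have h := hGmono ⟨hV, by linarith⟩ ⟨hVs0, hVsV₂.le⟩ hVVs
    rwa [hVseq] at h
  · intro V hVsV hVVp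
    rcases le_or_gt V V₂ with h | h
    · have h2 := hGmono ⟨hVs0, hVsV₂.le⟩ ⟨lt_trans hVs0 hVsV, h⟩ hVsV
      rwa [hVseq] at h2
    · exact hGanti ⟨h.le, hVVp.le⟩ ⟨hV₂Vp.le, le_rfl⟩ hVVp
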